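/- FHR moment function for the Mixed Interactive Hazards (MIH) model (T = 2, equation 7.4). Restrict covariates to the set {x ∈ ℝ^k : 1 + x'δ > 0}. Then for any bounded measurable m : (0,∞) × ℝ^k → ℝ, the function φ(y_0, y_1, y_2, x_1, x_2) = [p_1 − p_2^{r} / Γ(1 + r)] · m(y_0, x_1), where r = (1 + x_1'δ)/(1 + x_2'δ) and Γ is the real Gamma function, satisfies: (ii) for all (y_0, y_1, x_1, x_2, a) with 1 + x_1'δ > 0 and 1 + x_2'δ > 0, ∫₀^∞ φ(y_0, y_1, y_2, x_1, x_2) f_θ(y_2 | y_1, x_2, a) dy_2 = [p_1 − e^{−(1 + x_1'δ)a}] · m(y_0, x_1), which does not depend on x_2; and (i) for all (y_0, x_1, x_2, a) in that region, ∫₀^∞ ∫₀^∞ φ(y_0, y_1, y_2, x_1, x_2) f_θ(y_2 | y_1, x_2, a) f_θ(y_1 | y_0, x_1, a) dy_1 dy_2 = 0. -/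

import Mathlib

/-!
FHR moment function for the Mixed Interactive Hazards (MIH) model, T = 2 (Bonhomme,
Dano & Graham, equation (7.4)): on the region where `1 + x'δ > 0`, the function
`φ = [p_1 − p_2^r / Γ(1 + r)] m(y_0, x_1)` with `r = (1 + x_1'δ)/(1 + x_2'δ)` satisfies
the FHR conditions (ii) and (i).
-/

open MeasureTheory Set

noncomputable section

variable {k : ℕ}

/-- Integrated baseline hazard `Λ(y) = ∫₀^y λ(u) du`. -/
noncomputable def intHaz (lam : ℝ → ℝ) (y : ℝ) : ℝ := ∫ u in Set.Ioc (0:ℝ) y, lam u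

/-- Linear index of the MIH model: `γ y₋ + x'β + a + (x'δ) a`. -/
noncomputable def mihLin (γ : ℝ) (β δv : Fin k → ℝ) (ylag : ℝ) (x : Fin k → ℝ)
    (a : ℝ) : ℝ :=
  γ * ylag + (∑ i, x i * β i) + a + (∑ i, x i * δv i) * a

/-- Conditional duration density of the MIH model:
`f_θ(y | y₋, x, a) = e^{γ y₋ + x'β + a + (x'δ)a} λ_α(y)
  exp(−e^{γ y₋ + x'β + a + (x'δ)a} Λ_α(y))`. -/
noncomputable def mihDensity (lam : ℝ → ℝ) (γ : ℝ) (β δv : Fin k → ℝ)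
    (y ylag : ℝ) (x : Fin k → ℝ) (a : ℝ) : ℝ :=
  Real.exp (mihLin γ β δv ylag x a) * lam y *
    Real.exp (-(Real.exp (mihLin γ β δv ylag x a) * intHaz lam y))

/-- `p_t = Λ_α(y_t) e^{γ y_{t−1} + x_t'β}`. -/
noncomputable def mihP (lam : ℝ → ℝ) (γ : ℝ) (β : Fin k → ℝ) (y ylag : ℝ)
    (x : Fin k → ℝ) : ℝ :=
  intHaz lam y * Real.exp (γ * ylag + ∑ i, x i * β i)

/-- scaled Gamma integral -/
lemma gammaScaled_integrableOn {c r : ℝ} (hc : 0 < c) (hr : 0 ≤ r) :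
    IntegrableOn (fun t : ℝ => t ^ r * Real.exp (-(c * t))) (Ioi (0:ℝ)) := by
  have h0 : IntegrableOn (fun x : ℝ => Real.exp (-x) * x ^ r) (Ioi (0:ℝ)) := by
    simpa using Real.GammaIntegral_convergent (by linarith : (0:ℝ) < 1 + r)
  have h1 : IntegrableOn (fun x : ℝ => Real.exp (-(c * x)) * (c * x) ^ r) (Ioi (0:ℝ)) := by
    have := (integrableOn_Ioi_comp_mul_left_iff
      (fun x : ℝ => Real.exp (-x) * x ^ r) 0 hc).2 (by simpa using h0)
    simpa using this
  have h2 : IntegrableOn (fun x : ℝ => Real.exp (-(c * x)) * (c ^ r * x ^ r)) (Ioi (0:ℝ)) := by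
    refine h1.congr_fun (fun x hx => ?_) measurableSet_Ioi
    dsimp only
    rw [Real.mul_rpow hc.le (le_of_lt hx)]
  have h3 : IntegrableOn (fun x : ℝ => (c ^ r)⁻¹ * (Real.exp (-(c * x)) * (c ^ r * x ^ r))) (Ioi (0:ℝ)) := h2.const_mul (c ^ r)⁻¹
  refine (IntegrableOn.congr_fun h3 (fun x hx => ?_) measurableSet_Ioi)
  have hcr : (c : ℝ) ^ r ≠ 0 := (Real.rpow_pos_of_pos hc r).ne'
  field_simp

lemma gammaScaled_integral {c r : ℝ} (hc : 0 < c) (hr : 0 ≤ r) :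
    ∫ t in Ioi (0:ℝ), t ^ r * Real.exp (-(c * t)) =
      Real.Gamma (1 + r) / c ^ (1 + r) := by
  have hG : Real.Gamma (1 + r) = ∫ x in Ioi (0:ℝ), Real.exp (-x) * x ^ r := by
    rw [Real.Gamma_eq_integral (by linarith : (0:ℝ) < 1 + r)]
    simp
  have h1 : (∫ x in Ioi (0:ℝ), Real.exp (-(c * x)) * (c * x) ^ r)
      = c⁻¹ • ∫ x in Ioi (c * 0), Real.exp (-x) * x ^ r :=
    integral_comp_mul_left_Ioi (fun x : ℝ => Real.exp (-x) * x ^ r) 0 hc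
  rw [mul_zero, ← hG] at h1
  have h2 : (∫ x in Ioi (0:ℝ), Real.exp (-(c * x)) * (c * x) ^ r)
      = ∫ x in Ioi (0:ℝ), c ^ r * (x ^ r * Real.exp (-(c * x))) := by
    refine setIntegral_congr_fun measurableSet_Ioi (fun x hx => ?_)
    rw [Real.mul_rpow hc.le (le_of_lt hx)]
    ring
  rw [h2, integral_const_mul] at h1
  have hcr : (c : ℝ) ^ r ≠ 0 := (Real.rpow_pos_of_pos hc r).ne'
  have hone : c ^ (1 + r) = c * c ^ r := by
    rw [Real.rpow_add hc, Real.rpow_one]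
  rw [hone]
  have := h1
  rw [smul_eq_mul] at this
  field_simp at this ⊢
  linarith [this]

section Haz

variable {lam : ℝ → ℝ} (hlam_meas : Measurable lam)
  (hlam_pos : ∀ y ∈ Set.Ioi (0:ℝ), 0 < lam y)
  (hlam_int : ∀ y : ℝ, 0 < y → IntegrableOn lam (Set.Ioc 0 y) volume)
  (hlam_top : Filter.Tendsto (intHaz lam) Filter.atTop Filter.atTop)

/-- the nonnegative version of the hazard -/
def lam' (lam : ℝ → ℝ) : ℝ → ℝ := (Ioi (0:ℝ)).indicator lam

include hlam_pos in
lemma lam'_nonneg (y : ℝ) : 0 ≤ lam' lam y := by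
  unfold lam'
  by_cases h : y ∈ Ioi (0:ℝ)
  · rw [indicator_of_mem h]; exact (hlam_pos y h).le
  · rw [indicator_of_notMem h]

include hlam_int in
lemma lam'_intOn (a b : ℝ) : IntegrableOn (lam' lam) (Icc a b) volume := by
  unfold lam'
  rw [IntegrableOn, integrable_indicator_iff measurableSet_Ioi, IntegrableOn,
    Measure.restrict_restrict measurableSet_Ioi]
  have h1 : IntegrableOn lam (Ioc 0 (max b 1)) volume :=
    hlam_int _ (lt_of_lt_of_le one_pos (le_max_right _ _))
  refine h1.mono_set ?_
  rintro x ⟨hx1, hx2, hx3⟩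
  exact ⟨hx1, le_trans hx3 (le_max_left _ _)⟩

include hlam_int in
lemma lam'_intervalIntegrable (a b : ℝ) : IntervalIntegrable (lam' lam) volume a b := by
  rw [intervalIntegrable_iff]
  exact (lam'_intOn hlam_int (min a b) (max a b)).mono_set Set.uIoc_subset_uIcc

lemma intHaz_nonpos {y : ℝ} (hy : y ≤ 0) : intHaz lam y = 0 := by
  unfold intHaz
  rw [Set.Ioc_eq_empty (by simpa using hy), Measure.restrict_empty, integral_zero_measure]

include hlam_int in
lemma intHaz_eq_primitive (y : ℝ) : intHaz lam y = ∫ u in (0:ℝ)..y, lam' lam u := by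
  rcases le_or_gt y 0 with hy | hy
  · rw [intHaz_nonpos hy]
    have hz : ∫ x in Ioc y 0, lam' lam x = 0 := by
      calc ∫ x in Ioc y 0, lam' lam x = ∫ _x in Ioc y 0, (0:ℝ) :=
            setIntegral_congr_fun measurableSet_Ioc (fun x hx => indicator_of_notMem (by
              simp only [mem_Ioi, not_lt]; exact hx.2) lam)
        _ = 0 := by simp
    rw [intervalIntegral.integral_of_ge hy, hz, neg_zero]
  · rw [intervalIntegral.integral_of_le hy.le]
    unfold intHaz
    refine (setIntegral_congr_fun measurableSet_Ioc (fun x hx => ?_)).symm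
    exact indicator_of_mem (by exact hx.1) lam

include hlam_int in
lemma intHaz_continuous : Continuous (intHaz lam) := by
  have : intHaz lam = fun y => ∫ u in (0:ℝ)..y, lam' lam u := funext (intHaz_eq_primitive hlam_int)
  rw [this]
  exact intervalIntegral.continuous_primitive (fun a b => lam'_intervalIntegrable hlam_int a b) 0

include hlam_int hlam_pos in
lemma intHaz_mono : Monotone (intHaz lam) := by
  intro a b hab
  rw [intHaz_eq_primitive hlam_int a, intHaz_eq_primitive hlam_int b,
    ← intervalIntegral.integral_add_adjacent_intervals (b := a) (c := b)
      (lam'_intervalIntegrable hlam_int 0 a) (lam'_intervalIntegrable hlam_int a b)]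
  have : 0 ≤ ∫ u in a..b, lam' lam u :=
    intervalIntegral.integral_nonneg hab (fun u _ => lam'_nonneg hlam_pos u)
  linarith

include hlam_int hlam_pos in
lemma intHaz_nonneg (y : ℝ) : 0 ≤ intHaz lam y := by
  rcases le_or_gt y 0 with hy | hy
  · rw [intHaz_nonpos hy]
  · rw [← intHaz_nonpos (le_refl (0:ℝ))]
    exact intHaz_mono hlam_pos hlam_int hy.le

/-- the hazard measure -/
def hazMeas (lam : ℝ → ℝ) : Measure ℝ :=
  volume.withDensity (fun y => ENNReal.ofReal (lam' lam y))

include hlam_pos hlam_int in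
lemma hazMeas_Iic (y : ℝ) : hazMeas lam (Iic y) = ENNReal.ofReal (intHaz lam y) := by
  unfold hazMeas
  rw [withDensity_apply _ measurableSet_Iic]
  have hint : IntegrableOn (lam' lam) (Iic y) volume := by
    have h1 : IntegrableOn (lam' lam) (Iic 0) volume := by
      refine IntegrableOn.congr_fun (integrableOn_zero) (fun x hx => ?_) measurableSet_Iic
      exact (indicator_of_notMem (by simpa using hx) lam).symm
    have h2 : IntegrableOn (lam' lam) (Iic 0 ∪ Icc 0 (max y 0)) volume :=
      h1.union (lam'_intOn hlam_int 0 (max y 0))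
    refine h2.mono_set (fun x hx => ?_)
    rcases le_or_gt x 0 with h | h
    · exact Or.inl h
    · exact Or.inr ⟨h.le, le_trans hx (le_max_left _ _)⟩
  rw [← ofReal_integral_eq_lintegral_ofReal hint
    (Filter.Eventually.of_forall (fun x => lam'_nonneg hlam_pos x))]
  congr 1
  -- ∫ x in Iic y, lam' lam x = intHaz lam y
  rcases le_or_gt y 0 with hy | hy
  · rw [intHaz_nonpos hy]
    calc ∫ x in Iic y, lam' lam x = ∫ _x in Iic y, (0:ℝ) :=
          setIntegral_congr_fun measurableSet_Iic (fun x hx => indicator_of_notMem (by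
            simp only [mem_Ioi, not_lt]; exact le_trans hx hy) lam)
      _ = 0 := by simp
  · have hsplit : Iic y = Iic 0 ∪ Ioc 0 y := by
      rw [Iic_union_Ioc_eq_Iic hy.le]
    rw [hsplit, setIntegral_union (by rw [Set.disjoint_left]; rintro a ha hb; exact absurd hb.1 (not_lt.2 ha))
      measurableSet_Ioc (hint.mono_set (by rw [hsplit]; exact subset_union_left))
      (hint.mono_set (by rw [hsplit]; exact subset_union_right))]
    have h1 : ∫ x in Iic (0:ℝ), lam' lam x = 0 := by
      calc ∫ x in Iic (0:ℝ), lam' lam x = ∫ _x in Iic (0:ℝ), (0:ℝ) :=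
            setIntegral_congr_fun measurableSet_Iic (fun x hx => indicator_of_notMem (by
              simpa using hx) lam)
        _ = 0 := by simp
    have h2 : ∫ x in Ioc (0:ℝ) y, lam' lam x = intHaz lam y := by
      refine setIntegral_congr_fun measurableSet_Ioc (fun x hx => indicator_of_mem hx.1 lam)
    rw [h1, h2, zero_add]

include hlam_pos hlam_int hlam_top in
lemma hazMeas_levelSet {t : ℝ} (ht : 0 ≤ t) :
    hazMeas lam {y | intHaz lam y ≤ t} = ENNReal.ofReal t := by
  set L := intHaz lam with hL
  set S := {y | L y ≤ t} with hS
  -- S is a closed, bounded-above, nonempty lower set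
  have hcont : Continuous L := intHaz_continuous hlam_int
  have hmono : Monotone L := intHaz_mono hlam_pos hlam_int
  have hclosed : IsClosed S := isClosed_le hcont continuous_const
  have hne : S.Nonempty := ⟨0, by simp [hS, hL, intHaz_nonpos (le_refl (0:ℝ)), ht]⟩
  have hbdd : BddAbove S := by
    obtain ⟨M, hM⟩ := (hlam_top.eventually_gt_atTop t).exists_forall_of_atTop
    exact ⟨M, fun y hy => le_of_not_gt (fun h => absurd (hM y h.le) (not_lt.2 hy))⟩
  set b := sSup S with hb
  have hbS : b ∈ S := hclosed.csSup_mem hne hbdd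
  have hSIic : S = Iic b := by
    apply Subset.antisymm
    · exact fun y hy => le_csSup hbdd hy
    · exact fun y (hy : y ≤ b) => le_trans (hmono hy) hbS
  -- L b = t, using the intermediate value theorem
  have hLb : L b = t := by
    obtain ⟨M, hM⟩ := (hlam_top.eventually_ge_atTop t).exists_forall_of_atTop
    have hM' : t ≤ L (max M 0) := hM _ (le_max_left _ _)
    have h0 : L 0 = 0 := intHaz_nonpos (le_refl (0:ℝ))
    have : t ∈ Icc (L 0) (L (max M 0)) := ⟨by rw [h0]; exact ht, hM'⟩
    obtain ⟨y0, _, hy0⟩ := intermediate_value_Icc (le_max_right M 0) hcont.continuousOn this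
    have hy0S : y0 ∈ S := le_of_eq hy0
    exact le_antisymm hbS (hy0 ▸ hmono (le_csSup hbdd hy0S))
  rw [hSIic, hazMeas_Iic hlam_pos hlam_int]
  exact congrArg ENNReal.ofReal hLb

include hlam_pos hlam_int hlam_top in
lemma hazMeas_map :
    Measure.map (intHaz lam) (hazMeas lam) = volume.restrict (Ioi (0:ℝ)) := by
  set L := intHaz lam with hL
  have hLmeas : Measurable L := (intHaz_continuous hlam_int).measurable
  have hlevel0 : ∀ t : ℝ, t < 0 → hazMeas lam {y | L y ≤ t} = 0 := by
    intro t ht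
    have : {y | L y ≤ t} = ∅ := by
      ext y
      simp only [mem_setOf_eq, mem_empty_iff_false, iff_false, not_le]
      exact lt_of_lt_of_le ht (intHaz_nonneg hlam_pos hlam_int y)
    rw [this, measure_empty]
  have hlevel : ∀ t : ℝ, hazMeas lam {y | L y ≤ t} = ENNReal.ofReal t := by
    intro t
    rcases le_or_gt 0 t with ht | ht
    · exact hazMeas_levelSet hlam_pos hlam_int hlam_top ht
    · rw [hlevel0 t ht, ENNReal.ofReal_eq_zero.2 ht.le]
  have hmeasset : ∀ t : ℝ, MeasurableSet {y | L y ≤ t} :=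
    fun t => measurableSet_le hLmeas measurable_const
  refine Measure.ext_of_Ioc' _ _ (fun a b hab => ?_) (fun a b hab => ?_)
  · rw [Measure.map_apply hLmeas measurableSet_Ioc]
    have hsub : L ⁻¹' Ioc a b ⊆ {y | L y ≤ b} := fun y hy => hy.2
    refine ne_of_lt (lt_of_le_of_lt (measure_mono hsub) ?_)
    rw [hlevel b]
    exact ENNReal.ofReal_lt_top
  · rw [Measure.map_apply hLmeas measurableSet_Ioc,
      Measure.restrict_apply measurableSet_Ioc]
    have hpre : L ⁻¹' Ioc a b = {y | L y ≤ b} \ {y | L y ≤ a} := by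
      ext y
      simp only [mem_preimage, mem_Ioc, mem_diff, mem_setOf_eq, not_le]
      tauto
    have hdiff : hazMeas lam ({y | L y ≤ b} \ {y | L y ≤ a}) =
        hazMeas lam {y | L y ≤ b} - hazMeas lam {y | L y ≤ a} :=
      measure_diff (fun y (hy : L y ≤ a) => le_trans hy hab.le) (hmeasset a).nullMeasurableSet
        (by rw [hlevel a]; exact ENNReal.ofReal_ne_top)
    rw [hpre, hdiff, hlevel a, hlevel b]
    rcases le_or_gt 0 a with ha | ha
    · have : Ioc a b ∩ Ioi 0 = Ioc a b := by
        refine inter_eq_left.2 (fun x hx => lt_of_le_of_lt ha hx.1)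
      rw [this, Real.volume_Ioc, ← ENNReal.ofReal_sub _ ha]
    · rw [ENNReal.ofReal_eq_zero.2 ha.le, tsub_zero]
      rcases le_or_gt b 0 with hb | hb
      · have : Ioc a b ∩ Ioi 0 = ∅ := by
          ext x; simp only [mem_inter_iff, mem_Ioc, mem_Ioi, mem_empty_iff_false, iff_false]
          rintro ⟨⟨_, h2⟩, h3⟩; linarith
        rw [this, measure_empty, ENNReal.ofReal_eq_zero.2 hb]
      · have : Ioc a b ∩ Ioi 0 = Ioc 0 b := by
          ext x; simp only [mem_inter_iff, mem_Ioc, mem_Ioi]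
          constructor
          · rintro ⟨⟨_, h2⟩, h3⟩; exact ⟨h3, h2⟩
          · rintro ⟨h1, h2⟩; exact ⟨⟨lt_trans ha h1, h2⟩, h1⟩
        rw [this, Real.volume_Ioc, sub_zero]

include hlam_meas hlam_pos hlam_int hlam_top in
lemma intHaz_transfer (g : ℝ → ℝ) (hg : Measurable g) :
    ∫ y in Ioi (0:ℝ), g (intHaz lam y) * lam y = ∫ t in Ioi (0:ℝ), g t := by
  set L := intHaz lam with hL
  have hLmeas : Measurable L := (intHaz_continuous hlam_int).measurable
  have hlam'meas : Measurable (lam' lam) := hlam_meas.indicator measurableSet_Ioi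
  set lam'' : ℝ → NNReal := fun y => (lam' lam y).toNNReal with hlam''
  have hlam''meas : Measurable lam'' := hlam'meas.real_toNNReal
  have hdens : hazMeas lam = volume.withDensity (fun y => (lam'' y : ENNReal)) := rfl
  have step1 : ∫ y in Ioi (0:ℝ), g (L y) * lam y = ∫ y, lam'' y • g (L y) := by
    rw [← integral_indicator measurableSet_Ioi]
    congr 1
    funext x
    by_cases hx : x ∈ Ioi (0:ℝ)
    · rw [indicator_of_mem hx, hlam'', NNReal.smul_def,
        Real.coe_toNNReal _ (lam'_nonneg hlam_pos x)]
      unfold lam'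
      rw [indicator_of_mem hx, smul_eq_mul]
      ring
    · rw [indicator_of_notMem hx, hlam'', NNReal.smul_def,
        Real.coe_toNNReal _ (lam'_nonneg hlam_pos x), smul_eq_mul]
      unfold lam'
      rw [indicator_of_notMem hx, zero_mul]
  have step2 : ∫ y, g (L y) ∂(hazMeas lam) = ∫ y, lam'' y • g (L y) := by
    rw [hdens]
    exact integral_withDensity_eq_integral_smul hlam''meas (fun y => g (L y))
  have step3 : ∫ t, g t ∂(Measure.map L (hazMeas lam)) = ∫ y, g (L y) ∂(hazMeas lam) :=
    integral_map hLmeas.aemeasurable hg.aestronglyMeasurable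
  rw [step1, ← step2, ← step3, hazMeas_map hlam_pos hlam_int hlam_top]

lemma expScaled_integrableOn {c : ℝ} (hc : 0 < c) :
    IntegrableOn (fun t : ℝ => Real.exp (-(c * t))) (Ioi (0:ℝ)) := by
  simpa [neg_mul] using exp_neg_integrableOn_Ioi 0 hc

lemma expScaled_integral {c : ℝ} (hc : 0 < c) :
    ∫ t in Ioi (0:ℝ), Real.exp (-(c * t)) = 1 / c := by
  have h := integral_comp_mul_left_Ioi (fun x : ℝ => Real.exp (-x)) 0 hc
  rw [mul_zero] at h
  rw [h, integral_exp_neg_Ioi, neg_zero, Real.exp_zero, smul_eq_mul, mul_one, one_div]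

include hlam_meas hlam_pos hlam_int hlam_top in
lemma mih_core2 (P M E r c : ℝ) (hE : 0 < E) (hc : 0 < c) (hr : 0 < r) :
    ∫ y in Ioi (0:ℝ), (P - (intHaz lam y * E) ^ r / Real.Gamma (1 + r)) * M *
        (c * lam y * Real.exp (-(c * intHaz lam y))) =
      (P - (E / c) ^ r) * M := by
  set g : ℝ → ℝ := fun t => (P - (t * E) ^ r / Real.Gamma (1 + r)) * M *
    (c * Real.exp (-(c * t))) with hg_def
  have hg : Measurable g := by fun_prop
  have h1 : ∫ y in Ioi (0:ℝ), (P - (intHaz lam y * E) ^ r / Real.Gamma (1 + r)) * M *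
      (c * lam y * Real.exp (-(c * intHaz lam y))) =
      ∫ y in Ioi (0:ℝ), g (intHaz lam y) * lam y := by
    refine setIntegral_congr_fun measurableSet_Ioi (fun y _ => ?_)
    simp only [hg_def]
    ring
  rw [h1, intHaz_transfer hlam_meas hlam_pos hlam_int hlam_top g hg]
  have hΓ : 0 < Real.Gamma (1 + r) := Real.Gamma_pos_of_pos (by linarith)
  have h2 : ∫ t in Ioi (0:ℝ), g t =
      ∫ t in Ioi (0:ℝ), ((P * M * c) * Real.exp (-(c * t)) -
        (M * c * E ^ r / Real.Gamma (1 + r)) * (t ^ r * Real.exp (-(c * t)))) := by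
    refine setIntegral_congr_fun measurableSet_Ioi (fun t ht => ?_)
    simp only [hg_def]
    rw [Real.mul_rpow (le_of_lt ht) hE.le]
    ring
  rw [h2, integral_sub (((expScaled_integrableOn hc).const_mul _))
    ((gammaScaled_integrableOn hc hr.le).const_mul _),
    integral_const_mul, integral_const_mul, expScaled_integral hc,
    gammaScaled_integral hc hr.le]
  have hcr : (0:ℝ) < c ^ r := Real.rpow_pos_of_pos hc r
  have hc1r : c ^ (1 + r) = c * c ^ r := by rw [Real.rpow_add hc, Real.rpow_one]
  have hEc : (E / c) ^ r = E ^ r / c ^ r := Real.div_rpow hE.le hc.le r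
  rw [hc1r, hEc]
  field_simp

include hlam_meas hlam_pos hlam_int hlam_top in
lemma mih_core1 (M E K c : ℝ) (hc : 0 < c) :
    ∫ y in Ioi (0:ℝ), (intHaz lam y * E - K) * M *
        (c * lam y * Real.exp (-(c * intHaz lam y))) =
      (E / c - K) * M := by
  set g : ℝ → ℝ := fun t => (t * E - K) * M * (c * Real.exp (-(c * t))) with hg_def
  have hg : Measurable g := by fun_prop
  have h1 : ∫ y in Ioi (0:ℝ), (intHaz lam y * E - K) * M *
      (c * lam y * Real.exp (-(c * intHaz lam y))) =
      ∫ y in Ioi (0:ℝ), g (intHaz lam y) * lam y := by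
    refine setIntegral_congr_fun measurableSet_Ioi (fun y _ => ?_)
    simp only [hg_def]
    ring
  rw [h1, intHaz_transfer hlam_meas hlam_pos hlam_int hlam_top g hg]
  have h2 : ∫ t in Ioi (0:ℝ), g t =
      ∫ t in Ioi (0:ℝ), ((E * M * c) * (t ^ (1:ℝ) * Real.exp (-(c * t))) -
        (K * M * c) * Real.exp (-(c * t))) := by
    refine setIntegral_congr_fun measurableSet_Ioi (fun t ht => ?_)
    simp only [hg_def, Real.rpow_one]
    ring
  rw [h2, integral_sub ((gammaScaled_integrableOn hc zero_le_one).const_mul _)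
    ((expScaled_integrableOn hc).const_mul _),
    integral_const_mul, integral_const_mul, expScaled_integral hc,
    gammaScaled_integral hc zero_le_one]
  have hΓ2 : Real.Gamma (1 + 1) = 1 := by
    rw [Real.Gamma_add_one one_ne_zero, Real.Gamma_one, mul_one]
  have hc2 : c ^ ((1:ℝ) + 1) = c * c := by
    rw [Real.rpow_add hc, Real.rpow_one]
  rw [hΓ2, hc2]
  field_simp

end Haz

/-- **FHR moment function for the MIH model (T = 2, equation 7.4).** For covariates
restricted to `{x : 1 + x'δ > 0}` and any bounded measurable `m(y_0, x_1)`, the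
function `φ = [p_1 − p_2^r / Γ(1 + r)] m(y_0, x_1)`, `r = (1 + x_1'δ)/(1 + x_2'δ)`,
satisfies (ii): `∫₀^∞ φ f_θ(y_2|y_1,x_2,a) dy_2 = [p_1 − e^{−(1+x_1'δ)a}] m(y_0,x_1)`,
which does not depend on `x_2`; and (i): the double integral of `φ` against
`f_θ(y_2|y_1,x_2,a) f_θ(y_1|y_0,x_1,a)` is zero. -/
theorem mih_FHR_moment
    (lam : ℝ → ℝ) (hlam_meas : Measurable lam)
    (hlam_pos : ∀ y ∈ Set.Ioi (0:ℝ), 0 < lam y)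
    (hlam_int : ∀ y : ℝ, 0 < y → IntegrableOn lam (Set.Ioc 0 y) volume)
    (hlam_top : Filter.Tendsto (intHaz lam) Filter.atTop Filter.atTop)
    (γ : ℝ) (β δv : Fin k → ℝ)
    (m : ℝ → (Fin k → ℝ) → ℝ)
    (hm_meas : Measurable fun p : ℝ × (Fin k → ℝ) => m p.1 p.2)
    (hm_bdd : ∃ C, ∀ (y0 : ℝ) (x : Fin k → ℝ), |m y0 x| ≤ C) :
    -- condition (ii)
    (∀ (y0 y1 : ℝ) (x1 x2 : Fin k → ℝ) (a : ℝ), 0 < y0 → 0 < y1 →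
      0 < 1 + ∑ i, x1 i * δv i → 0 < 1 + ∑ i, x2 i * δv i →
      (∫ y2 in Set.Ioi (0:ℝ),
          (mihP lam γ β y1 y0 x1 -
              mihP lam γ β y2 y1 x2 ^
                  ((1 + ∑ i, x1 i * δv i) / (1 + ∑ i, x2 i * δv i)) /
                Real.Gamma (1 + (1 + ∑ i, x1 i * δv i) / (1 + ∑ i, x2 i * δv i))) *
            m y0 x1 * mihDensity lam γ β δv y2 y1 x2 a) =
        (mihP lam γ β y1 y0 x1 - Real.exp (-((1 + ∑ i, x1 i * δv i) * a))) * m y0 x1) ∧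
    -- condition (i)
    (∀ (y0 : ℝ) (x1 x2 : Fin k → ℝ) (a : ℝ), 0 < y0 →
      0 < 1 + ∑ i, x1 i * δv i → 0 < 1 + ∑ i, x2 i * δv i →
      (∫ y1 in Set.Ioi (0:ℝ), ∫ y2 in Set.Ioi (0:ℝ),
          (mihP lam γ β y1 y0 x1 -
              mihP lam γ β y2 y1 x2 ^
                  ((1 + ∑ i, x1 i * δv i) / (1 + ∑ i, x2 i * δv i)) /
                Real.Gamma (1 + (1 + ∑ i, x1 i * δv i) / (1 + ∑ i, x2 i * δv i))) *
            m y0 x1 * mihDensity lam γ β δv y2 y1 x2 a *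
            mihDensity lam γ β δv y1 y0 x1 a) = 0) := by
  have hii : ∀ (y0 y1 : ℝ) (x1 x2 : Fin k → ℝ) (a : ℝ), 0 < y0 → 0 < y1 →
      0 < 1 + ∑ i, x1 i * δv i → 0 < 1 + ∑ i, x2 i * δv i →
      (∫ y2 in Set.Ioi (0:ℝ),
          (mihP lam γ β y1 y0 x1 -
              mihP lam γ β y2 y1 x2 ^
                  ((1 + ∑ i, x1 i * δv i) / (1 + ∑ i, x2 i * δv i)) /
                Real.Gamma (1 + (1 + ∑ i, x1 i * δv i) / (1 + ∑ i, x2 i * δv i))) *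
            m y0 x1 * mihDensity lam γ β δv y2 y1 x2 a) =
        (mihP lam γ β y1 y0 x1 - Real.exp (-((1 + ∑ i, x1 i * δv i) * a))) * m y0 x1 := by
    intro y0 y1 x1 x2 a hy0 hy1 hE1 hE2
    have hcore := mih_core2 hlam_meas hlam_pos hlam_int hlam_top
      (mihP lam γ β y1 y0 x1) (m y0 x1) (Real.exp (γ * y1 + ∑ i, x2 i * β i))
      ((1 + ∑ i, x1 i * δv i) / (1 + ∑ i, x2 i * δv i))
      (Real.exp (mihLin γ β δv y1 x2 a)) (Real.exp_pos _) (Real.exp_pos _)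
      (div_pos hE1 hE2)
    have hratio : Real.exp (γ * y1 + ∑ i, x2 i * β i) / Real.exp (mihLin γ β δv y1 x2 a)
        = Real.exp (-((1 + ∑ i, x2 i * δv i) * a)) := by
      rw [← Real.exp_sub]
      congr 1
      unfold mihLin
      ring
    have hpow : Real.exp (-((1 + ∑ i, x2 i * δv i) * a)) ^
        ((1 + ∑ i, x1 i * δv i) / (1 + ∑ i, x2 i * δv i))
        = Real.exp (-((1 + ∑ i, x1 i * δv i) * a)) := by
      rw [← Real.exp_mul]
      congr 1
      field_simp
    rw [hratio, hpow] at hcore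
    simp only [mihP, mihDensity] at hcore ⊢
    exact hcore
  refine ⟨hii, ?_⟩
  intro y0 x1 x2 a hy0 hE1 hE2
  have hstep : ∀ y1 ∈ Set.Ioi (0:ℝ),
      (∫ y2 in Set.Ioi (0:ℝ),
          (mihP lam γ β y1 y0 x1 -
              mihP lam γ β y2 y1 x2 ^
                  ((1 + ∑ i, x1 i * δv i) / (1 + ∑ i, x2 i * δv i)) /
                Real.Gamma (1 + (1 + ∑ i, x1 i * δv i) / (1 + ∑ i, x2 i * δv i))) *
            m y0 x1 * mihDensity lam γ β δv y2 y1 x2 a *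
            mihDensity lam γ β δv y1 y0 x1 a) =
      (intHaz lam y1 * Real.exp (γ * y0 + ∑ i, x1 i * β i) -
          Real.exp (-((1 + ∑ i, x1 i * δv i) * a))) * m y0 x1 *
        mihDensity lam γ β δv y1 y0 x1 a := by
    intro y1 hy1
    rw [integral_mul_const, hii y0 y1 x1 x2 a hy0 hy1 hE1 hE2]
    simp only [mihP]
  rw [setIntegral_congr_fun measurableSet_Ioi hstep]
  have hcore := mih_core1 hlam_meas hlam_pos hlam_int hlam_top
    (m y0 x1) (Real.exp (γ * y0 + ∑ i, x1 i * β i))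
    (Real.exp (-((1 + ∑ i, x1 i * δv i) * a)))
    (Real.exp (mihLin γ β δv y0 x1 a)) (Real.exp_pos _)
  have hratio : Real.exp (γ * y0 + ∑ i, x1 i * β i) / Real.exp (mihLin γ β δv y0 x1 a)
      = Real.exp (-((1 + ∑ i, x1 i * δv i) * a)) := by
    rw [← Real.exp_sub]
    congr 1
    unfold mihLin
    ring
  rw [hratio, sub_self, zero_mul] at hcore
  simp only [mihDensity] at hcore ⊢
  exact hcore

end
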